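/- arXiv:1302.1978 — 5 statements merged into one kernel-verified Lean document; each statement's English description precedes it below -/
import Mathlib

section
/- A proper function f : X → ℝ∪{+∞} is convex and lower semicontinuous if and only if f = f** restricted to X (biconjugate theorem). -/
noncomputable section
open NormedSpace

/-- Convexity for extended-real-valued functions. -/
def ERealConvexOn {X : Type*} [AddCommGroup X] [Module ℝ X] (f : X → EReal) : Prop :=
  ∀ x y : X, ∀ a b : ℝ, 0 ≤ a → 0 ≤ b → a + b = 1 →
    f (a • x + b • y) ≤ (a : EReal) * f x + (b : EReal) * f y

/-- The Fenchel conjugate of `f : Y → ℝ ∪ {±∞}` on a normed space `Y`. -/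
def fenchelConj {Y : Type*} [NormedAddCommGroup Y] [NormedSpace ℝ Y]
    (f : Y → EReal) (φ : StrongDual ℝ Y) : EReal :=
  ⨆ x : Y, ((φ x : EReal) - f x)

namespace BiconjAux

lemma ereal_cases_ne_bot {a : EReal} (h : a ≠ ⊥) : a = ⊤ ∨ ∃ r : ℝ, a = (r : EReal) := by
  induction a with
  | bot => simp at h
  | coe r => exact Or.inr ⟨r, rfl⟩
  | top => exact Or.inl rfl

lemma ereal_sub_sub_le {a : ℝ} {b c : EReal} (hb : b ≠ ⊥) (h : (a : EReal) - b ≤ c) :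
    (a : EReal) - c ≤ b := by
  induction b with
  | bot => simp at hb
  | coe r =>
    induction c with
    | bot =>
      rw [← EReal.coe_sub, le_bot_iff] at h
      exact absurd h (EReal.coe_ne_bot _)
    | coe s =>
      rw [← EReal.coe_sub] at h ⊢
      rw [EReal.coe_le_coe_iff] at h ⊢; linarith
    | top => rw [EReal.sub_top]; exact bot_le
  | top => exact le_top

variable {X : Type*} [NormedAddCommGroup X] [NormedSpace ℝ X]

lemma term_le (f : X → EReal) (φ : StrongDual ℝ X) (x : X) :
    (φ x : EReal) - f x ≤ fenchelConj f φ :=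
  le_iSup (fun x => ((φ x : EReal) - f x)) x

lemma double_le (f : X → EReal) (hbot : ∀ x, f x ≠ ⊥) (x : X) :
    fenchelConj (fenchelConj f) (inclusionInDoubleDual ℝ X x) ≤ f x := by
  refine iSup_le fun φ => ?_
  rw [dual_def]
  exact ereal_sub_sub_le (hbot x) (term_le f φ x)

lemma conj_ne_bot (f : X → EReal) {x₁ : X} {r₁ : ℝ} (hx₁ : f x₁ = (r₁ : EReal))
    (φ : StrongDual ℝ X) : fenchelConj f φ ≠ ⊥ := by
  intro h
  have := term_le f φ x₁
  rw [h, le_bot_iff, hx₁, ← EReal.coe_sub] at this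
  exact EReal.coe_ne_bot _ this

/-- The real epigraph. -/
def Epi (f : X → EReal) : Set (X × ℝ) := {p | f p.1 ≤ (p.2 : EReal)}

lemma epi_closed {f : X → EReal} (hlsc : LowerSemicontinuous f) : IsClosed (Epi f) := by
  have h := hlsc.isClosed_epigraph
  have he : Epi f = (fun p : X × ℝ => (p.1, (p.2 : EReal))) ⁻¹' {p : X × EReal | f p.1 ≤ p.2} :=
    rfl
  rw [he]
  exact h.preimage (continuous_fst.prodMk (continuous_coe_real_ereal.comp continuous_snd))

lemma epi_convex {f : X → EReal} (hconv : ERealConvexOn f) : Convex ℝ (Epi f) := by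
  intro p hp q hq a b ha hb hab
  simp only [Epi, Set.mem_setOf_eq] at *
  have h1 : f (a • p.1 + b • q.1) ≤ (a : EReal) * f p.1 + (b : EReal) * f q.1 :=
    hconv p.1 q.1 a b ha hb hab
  have h2 : (a : EReal) * f p.1 + (b : EReal) * f q.1 ≤
      (a : EReal) * (p.2 : EReal) + (b : EReal) * (q.2 : EReal) :=
    add_le_add (mul_le_mul_of_nonneg_left hp (EReal.coe_nonneg.mpr ha))
      (mul_le_mul_of_nonneg_left hq (EReal.coe_nonneg.mpr hb))
  refine le_trans (le_trans h1 h2) (le_of_eq ?_)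
  show (↑a * ↑p.2 + ↑b * ↑q.2 : EReal) = ((a * p.2 + b * q.2 : ℝ) : EReal)
  rw [EReal.coe_add, EReal.coe_mul, EReal.coe_mul]

lemma sep {f : X → EReal} [CompleteSpace X] (hconv : ERealConvexOn f)
    (hlsc : LowerSemicontinuous f) (x₀ : X) (m : ℝ) (hm : (m : EReal) < f x₀)
    (x₁ : X) (r₁ : ℝ) (hx₁ : f x₁ = (r₁ : EReal)) :
    ∃ (φ : StrongDual ℝ X) (c u : ℝ), c ≤ 0 ∧
      (∀ (x : X) (t : ℝ), f x ≤ (t : EReal) → φ x + t * c < u) ∧ u < φ x₀ + m * c := by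
  have hne : (x₀, m) ∉ Epi f := by
    simp only [Epi, Set.mem_setOf_eq, not_le]
    exact hm
  obtain ⟨ψ, u, hsep, hx⟩ :=
    geometric_hahn_banach_closed_point (epi_convex hconv) (epi_closed hlsc) hne
  set φ : StrongDual ℝ X := ψ.comp (ContinuousLinearMap.inl ℝ X ℝ) with hφ
  set c : ℝ := ψ (0, 1) with hcdef
  have hdec : ∀ (x : X) (t : ℝ), ψ (x, t) = φ x + t * c := by
    intro x t
    have hxt : (x, t) = (x, (0:ℝ)) + t • ((0 : X), (1 : ℝ)) := by
      simp [Prod.ext_iff]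
    rw [hxt, map_add, map_smul]
    simp only [hφ, ContinuousLinearMap.comp_apply, ContinuousLinearMap.inl_apply, smul_eq_mul, ← hcdef]
  have key : ∀ (x : X) (t : ℝ), f x ≤ (t : EReal) → φ x + t * c < u := by
    intro x t h
    have := hsep (x, t) h
    rwa [hdec x t] at this
  have hc : c ≤ 0 := by
    by_contra hc
    push_neg at hc
    have h1 := key x₁ (max r₁ ((u - φ x₁) / c))
      (by rw [hx₁]; exact_mod_cast le_max_left _ _)
    have h2 : (u - φ x₁) / c ≤ max r₁ ((u - φ x₁) / c) := le_max_right _ _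
    rw [div_le_iff₀ hc] at h2
    linarith
  refine ⟨φ, c, u, hc, key, ?_⟩
  have := hx
  rwa [hdec x₀ m] at this

lemma neg_case (f : X → EReal) (hbot : ∀ x, f x ≠ ⊥) (φ : StrongDual ℝ X) (c u : ℝ) (hc : c < 0)
    (key : ∀ (x : X) (t : ℝ), f x ≤ (t : EReal) → φ x + t * c < u) (x₀ : X) (m : ℝ)
    (hx : u < φ x₀ + m * c) :
    ∃ (φ' : StrongDual ℝ X) (r' : ℝ), fenchelConj f φ' ≤ (r' : EReal) ∧ m < φ' x₀ - r' := by
  have hpos : 0 < -c := by linarith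
  refine ⟨(-c)⁻¹ • φ, u / (-c), ?_, ?_⟩
  · refine iSup_le fun x => ?_
    rcases ereal_cases_ne_bot (hbot x) with htop | ⟨r, hr⟩
    · rw [htop, EReal.sub_top]; exact bot_le
    · rw [hr, ← EReal.coe_sub, EReal.coe_le_coe_iff]
      have h1 := key x r (le_of_eq hr)
      simp only [ContinuousLinearMap.smul_apply, smul_eq_mul]
      have hinv : 0 < (-c)⁻¹ := inv_pos.mpr hpos
      have hnc : (-c) ≠ 0 := ne_of_gt hpos
      have h3 := mul_lt_mul_of_pos_left h1 hinv
      have hc0 : c ≠ 0 := by linarith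
      have heq : (-c)⁻¹ * (φ x + r * c) = (-c)⁻¹ * φ x - r := by
        field_simp
        ring
      rw [heq] at h3
      rw [div_eq_inv_mul]
      linarith
  · simp only [ContinuousLinearMap.smul_apply, smul_eq_mul]
    have hinv : 0 < (-c)⁻¹ := inv_pos.mpr hpos
    have hnc : (-c) ≠ 0 := ne_of_gt hpos
    have h3 := mul_lt_mul_of_pos_left hx hinv
    have hc0 : c ≠ 0 := by linarith
    have heq : (-c)⁻¹ * (φ x₀ + m * c) = (-c)⁻¹ * φ x₀ - m := by
      field_simp
      ring
    rw [heq] at h3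
    rw [lt_sub_iff_add_lt, div_eq_inv_mul]
    linarith

lemma conj_proper (f : X → EReal) [CompleteSpace X] (hbot : ∀ x, f x ≠ ⊥)
    (hconv : ERealConvexOn f) (hlsc : LowerSemicontinuous f)
    (x₁ : X) (r₁ : ℝ) (hx₁ : f x₁ = (r₁ : EReal)) :
    ∃ (φ₀ : StrongDual ℝ X) (r₀ : ℝ), fenchelConj f φ₀ ≤ (r₀ : EReal) := by
  have hm : ((r₁ - 1 : ℝ) : EReal) < f x₁ := by
    rw [hx₁]; exact_mod_cast sub_one_lt r₁
  obtain ⟨φ, c, u, hc, key, hx⟩ := sep hconv hlsc x₁ (r₁ - 1) hm x₁ r₁ hx₁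
  have hcneg : c < 0 := by
    rcases lt_or_eq_of_le hc with h | h
    · exact h
    · exfalso
      have h1 := key x₁ r₁ (le_of_eq hx₁)
      rw [h] at hx h1
      simp at hx h1
      linarith
  obtain ⟨φ', r', h, _⟩ := neg_case f hbot φ c u hcneg key x₁ (r₁ - 1) hx
  exact ⟨φ', r', h⟩

lemma le_double (f : X → EReal) [CompleteSpace X] (hbot : ∀ x, f x ≠ ⊥)
    (hconv : ERealConvexOn f) (hlsc : LowerSemicontinuous f)
    (x₁ : X) (r₁ : ℝ) (hx₁ : f x₁ = (r₁ : EReal)) (x₀ : X) :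
    f x₀ ≤ fenchelConj (fenchelConj f) (inclusionInDoubleDual ℝ X x₀) := by
  by_contra hlt
  push_neg at hlt
  obtain ⟨m, hm1, hm2⟩ := EReal.exists_between_coe_real hlt
  have contra : (m : EReal) ≤ fenchelConj (fenchelConj f) (inclusionInDoubleDual ℝ X x₀) := by
    obtain ⟨φ, c, u, hc, key, hx⟩ := sep hconv hlsc x₀ m hm2 x₁ r₁ hx₁
    have step : ∃ (φ' : StrongDual ℝ X) (r' : ℝ), fenchelConj f φ' ≤ (r' : EReal) ∧
        m ≤ φ' x₀ - r' := by
      rcases lt_or_eq_of_le hc with hcneg | hczero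
      · obtain ⟨φ', r', h1, h2⟩ := neg_case f hbot φ c u hcneg key x₀ m hx
        exact ⟨φ', r', h1, h2.le⟩
      · -- c = 0
        have key' : ∀ (x : X) (t : ℝ), f x ≤ (t : EReal) → φ x < u := by
          intro x t h
          have := key x t h
          rw [hczero] at this
          simpa using this
        have hxu : u < φ x₀ := by rw [hczero] at hx; simpa using hx
        obtain ⟨φ₀, r₀, hφ₀⟩ := conj_proper f hbot hconv hlsc x₁ r₁ hx₁
        set d : ℝ := φ x₀ - u with hd
        have hdpos : 0 < d := by simp only [hd]; linarith
        set lam : ℝ := max 0 ((m - (φ₀ x₀ - r₀)) / d) with hlamdef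
        have hlam : 0 ≤ lam := le_max_left _ _
        refine ⟨φ₀ + lam • φ, r₀ + lam * u, ?_, ?_⟩
        · refine iSup_le fun x => ?_
          rcases ereal_cases_ne_bot (hbot x) with htop | ⟨r, hr⟩
          · rw [htop, EReal.sub_top]; exact bot_le
          · rw [hr, ← EReal.coe_sub, EReal.coe_le_coe_iff]
            have h1 : φ₀ x - r ≤ r₀ := by
              have := le_trans (term_le f φ₀ x) hφ₀
              rwa [hr, ← EReal.coe_sub, EReal.coe_le_coe_iff] at this
            have h2 : φ x < u := key' x r (le_of_eq hr)
            simp only [ContinuousLinearMap.add_apply, ContinuousLinearMap.smul_apply,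
              smul_eq_mul]
            nlinarith [mul_le_mul_of_nonneg_left h2.le hlam]
        · simp only [ContinuousLinearMap.add_apply, ContinuousLinearMap.smul_apply,
            smul_eq_mul]
          have hlam2 : (m - (φ₀ x₀ - r₀)) / d ≤ lam := le_max_right _ _
          rw [div_le_iff₀ hdpos] at hlam2
          simp only [hd] at hlam2
          nlinarith
    obtain ⟨φ', r', h1, h2⟩ := step
    calc (m : EReal) ≤ ((φ' x₀ - r' : ℝ) : EReal) := EReal.coe_le_coe_iff.mpr h2
      _ = (φ' x₀ : EReal) - (r' : EReal) := EReal.coe_sub _ _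
      _ ≤ (φ' x₀ : EReal) - fenchelConj f φ' := EReal.sub_le_sub le_rfl h1
      _ = ((inclusionInDoubleDual ℝ X x₀) φ' : EReal) - fenchelConj f φ' := by rw [dual_def]
      _ ≤ fenchelConj (fenchelConj f) (inclusionInDoubleDual ℝ X x₀) :=
          term_le (fenchelConj f) (inclusionInDoubleDual ℝ X x₀) φ'
  exact absurd hm1 (not_lt.mpr contra)

lemma double_eq_sup (f : X → EReal) :
    (fun x => fenchelConj (fenchelConj f) (inclusionInDoubleDual ℝ X x)) =
      fun x => ⨆ φ : StrongDual ℝ X, ((φ x : EReal) - fenchelConj f φ) := by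
  funext x
  unfold fenchelConj
  exact iSup_congr fun φ => by rw [dual_def]

lemma double_lsc (f : X → EReal) {x₁ : X} {r₁ : ℝ} (hx₁ : f x₁ = (r₁ : EReal)) :
    LowerSemicontinuous
      (fun x => fenchelConj (fenchelConj f) (inclusionInDoubleDual ℝ X x)) := by
  rw [double_eq_sup f]
  apply lowerSemicontinuous_iSup
  intro φ
  rcases ereal_cases_ne_bot (conj_ne_bot f hx₁ φ) with htop | ⟨s, hs⟩
  · simp only [htop, EReal.sub_top]
    exact lowerSemicontinuous_const
  · have : (fun x => ((φ x : EReal) - fenchelConj f φ)) =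
        fun x => (((φ x - s : ℝ)) : EReal) := by
      funext x; rw [hs, ← EReal.coe_sub]
    rw [this]
    exact (continuous_coe_real_ereal.comp ((φ.continuous).sub continuous_const)).lowerSemicontinuous

lemma double_convex (f : X → EReal) {x₁ : X} {r₁ : ℝ} (hx₁ : f x₁ = (r₁ : EReal)) :
    ERealConvexOn (fun x => fenchelConj (fenchelConj f) (inclusionInDoubleDual ℝ X x)) := by
  intro x y a b ha hb hab
  simp only []
  refine iSup_le fun φ => ?_
  rw [dual_def]
  rcases ereal_cases_ne_bot (conj_ne_bot f hx₁ φ) with htop | ⟨s, hs⟩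
  · rw [htop, EReal.sub_top]; exact bot_le
  · rw [hs]
    have hval : (φ (a • x + b • y) : EReal) - (s : EReal) =
        (a : EReal) * ((φ x - s : ℝ) : EReal) + (b : EReal) * ((φ y - s : ℝ) : EReal) := by
      rw [← EReal.coe_sub, ← EReal.coe_mul, ← EReal.coe_mul, ← EReal.coe_add,
        EReal.coe_eq_coe_iff]
      rw [map_add, map_smul, map_smul]
      simp only [smul_eq_mul]
      linear_combination s * hab
    rw [hval]
    refine add_le_add ?_ ?_
    · refine mul_le_mul_of_nonneg_left ?_ (EReal.coe_nonneg.mpr ha)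
      calc ((φ x - s : ℝ) : EReal) = (φ x : EReal) - fenchelConj f φ := by
            rw [EReal.coe_sub, hs]
        _ = ((inclusionInDoubleDual ℝ X x) φ : EReal) - fenchelConj f φ := by rw [dual_def]
        _ ≤ _ := term_le (fenchelConj f) (inclusionInDoubleDual ℝ X x) φ
    · refine mul_le_mul_of_nonneg_left ?_ (EReal.coe_nonneg.mpr hb)
      calc ((φ y - s : ℝ) : EReal) = (φ y : EReal) - fenchelConj f φ := by
            rw [EReal.coe_sub, hs]
        _ = ((inclusionInDoubleDual ℝ X y) φ : EReal) - fenchelConj f φ := by rw [dual_def]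
        _ ≤ _ := term_le (fenchelConj f) (inclusionInDoubleDual ℝ X y) φ

end BiconjAux

open BiconjAux in
/-- Biconjugate theorem: a proper function `f : X → ℝ ∪ {+∞}` on a Banach space
is convex and lower semicontinuous if and only if `f = f**|_X`, where `X` is
canonically embedded in `X**`. -/
theorem biconjugate_theorem {X : Type*} [NormedAddCommGroup X] [NormedSpace ℝ X]
    [CompleteSpace X] (f : X → EReal) (hbot : ∀ x, f x ≠ ⊥) (hproper : ∃ x, f x ≠ ⊤) :
    (ERealConvexOn f ∧ LowerSemicontinuous f) ↔
      ∀ x : X, f x = fenchelConj (fenchelConj f) (inclusionInDoubleDual ℝ X x) := by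
  obtain ⟨x₁, hx₁t⟩ := hproper
  obtain ⟨r₁, hx₁⟩ : ∃ r : ℝ, f x₁ = (r : EReal) := by
    rcases ereal_cases_ne_bot (hbot x₁) with h | h
    · exact absurd h hx₁t
    · exact h
  constructor
  · rintro ⟨hconv, hlsc⟩ x
    exact le_antisymm (le_double f hbot hconv hlsc x₁ r₁ hx₁ x) (double_le f hbot x)
  · intro h
    have hf : f = fun x => fenchelConj (fenchelConj f) (inclusionInDoubleDual ℝ X x) :=
      funext h
    constructor
    · rw [hf]; exact double_convex f hx₁
    · rw [hf]; exact double_lsc f hx₁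
end
end

section
/- (Sandwich theorem) Let X, Y be Banach spaces, T : X → Y bounded linear, and f : X → ℝ∪{+∞}, g : Y → ℝ∪{+∞} proper convex with f ≥ −g∘T. Assume g is continuous at some point of T(dom f). Then there exist y* ∈ Y* and r ∈ ℝ such that the affine function α(x) = ⟨T*y*, x⟩ + r satisfies f ≥ α ≥ −g∘T on X. -/
noncomputable section
open NormedSpace

/-- Sandwich theorem: if `f : X → ℝ ∪ {+∞}` and `g : Y → ℝ ∪ {+∞}` are proper convex,
`T : X → Y` is bounded linear, `f ≥ −g∘T`, and `g` is continuous (and finite) at some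
point of `T(dom f)`, then there is an affine function `α(x) = ⟨T*y*, x⟩ + r` with
`f ≥ α ≥ −g∘T`. -/
theorem sandwich_theorem {X Y : Type*} [NormedAddCommGroup X] [NormedSpace ℝ X]
    [CompleteSpace X] [NormedAddCommGroup Y] [NormedSpace ℝ Y] [CompleteSpace Y]
    (T : X →L[ℝ] Y) (f : X → EReal) (g : Y → EReal)
    (hfbot : ∀ x, f x ≠ ⊥) (hgbot : ∀ y, g y ≠ ⊥)
    (hfproper : ∃ x, f x ≠ ⊤) (hgproper : ∃ y, g y ≠ ⊤)
    (hfconv : ERealConvexOn f) (hgconv : ERealConvexOn g)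
    (hge : ∀ x : X, -g (T x) ≤ f x)
    (hcq : ∃ x₀ : X, f x₀ ≠ ⊤ ∧ g (T x₀) ≠ ⊤ ∧ ContinuousAt g (T x₀)) :
    ∃ (ψ : StrongDual ℝ Y) (r : ℝ), ∀ x : X,
      ((ψ (T x) + r : ℝ) : EReal) ≤ f x ∧ -g (T x) ≤ ((ψ (T x) + r : ℝ) : EReal) := by
  obtain ⟨x₀, hfx₀, hgx₀, hgcont⟩ := hcq
  set y₀ := T x₀ with hy₀
  set v : ℝ := (g y₀).toReal with hvdef
  have hv : ((v : ℝ) : EReal) = g y₀ := EReal.coe_toReal hgx₀ (hgbot y₀)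
  -- a ball on which g < v + 1
  have hnhds : g ⁻¹' (Set.Iio ((v + 1 : ℝ) : EReal)) ∈ nhds y₀ := by
    apply hgcont.preimage_mem_nhds
    apply isOpen_Iio.mem_nhds
    rw [Set.mem_Iio, ← hv]
    exact_mod_cast (by linarith : v < v + 1)
  obtain ⟨δ, hδpos, hδ⟩ := Metric.mem_nhds_iff.1 hnhds
  -- the two convex sets
  set U : Set (Y × ℝ) := {p | g p.1 < (p.2 : EReal)} with hUdef
  set H : Set (Y × ℝ) := {p | ∃ x, T x = p.1 ∧ (p.2 : EReal) ≤ -f x} with hHdef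
  have hUconv : Convex ℝ U := by
    rintro ⟨y₁, t₁⟩ h₁ ⟨y₂, t₂⟩ h₂ a b ha hb hab
    simp only [hUdef, Set.mem_setOf_eq] at h₁ h₂ ⊢
    have hne₁ : g y₁ ≠ ⊤ := (h₁.trans (EReal.coe_lt_top t₁)).ne
    have hne₂ : g y₂ ≠ ⊤ := (h₂.trans (EReal.coe_lt_top t₂)).ne
    have hr₁ : (((g y₁).toReal : ℝ) : EReal) = g y₁ := EReal.coe_toReal hne₁ (hgbot y₁)
    have hr₂ : (((g y₂).toReal : ℝ) : EReal) = g y₂ := EReal.coe_toReal hne₂ (hgbot y₂)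
    set r₁ := (g y₁).toReal
    set r₂ := (g y₂).toReal
    have hrt₁ : r₁ < t₁ := by rw [← EReal.coe_lt_coe_iff, hr₁]; exact h₁
    have hrt₂ : r₂ < t₂ := by rw [← EReal.coe_lt_coe_iff, hr₂]; exact h₂
    have hkey : a * r₁ + b * r₂ < a * t₁ + b * t₂ := by
      rcases eq_or_lt_of_le ha with rfl | ha'
      · have : b = 1 := by linarith
        simp [this, hrt₂]
      · have h1 : a * r₁ < a * t₁ := by exact mul_lt_mul_of_pos_left hrt₁ ha'
        have h2 : b * r₂ ≤ b * t₂ := mul_le_mul_of_nonneg_left hrt₂.le hb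
        linarith
    calc g (a • y₁ + b • y₂) ≤ (a : EReal) * g y₁ + (b : EReal) * g y₂ :=
          hgconv y₁ y₂ a b ha hb hab
      _ = ((a * r₁ + b * r₂ : ℝ) : EReal) := by
          rw [← hr₁, ← hr₂]; norm_cast
      _ < ((a * t₁ + b * t₂ : ℝ) : EReal) := by exact_mod_cast hkey
      _ = (((a • (y₁, t₁) + b • (y₂, t₂) : Y × ℝ).2 : ℝ) : EReal) := by
          simp [Prod.smul_def, smul_eq_mul]
  have hHconv : Convex ℝ H := by
    rintro ⟨y₁, t₁⟩ h₁ ⟨y₂, t₂⟩ h₂ a b ha hb hab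
    simp only [hHdef, Set.mem_setOf_eq] at h₁ h₂ ⊢
    obtain ⟨x₁, hx₁, hle₁⟩ := h₁
    obtain ⟨x₂, hx₂, hle₂⟩ := h₂
    refine ⟨a • x₁ + b • x₂, ?_, ?_⟩
    · simp [map_add, map_smul, hx₁, hx₂, Prod.smul_def]
    · have hf₁ : f x₁ ≤ ((-t₁ : ℝ) : EReal) := by
        rw [EReal.coe_neg]; exact EReal.le_neg_of_le_neg hle₁
      have hf₂ : f x₂ ≤ ((-t₂ : ℝ) : EReal) := by
        rw [EReal.coe_neg]; exact EReal.le_neg_of_le_neg hle₂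
      have hne₁ : f x₁ ≠ ⊤ := (hf₁.trans_lt (EReal.coe_lt_top _)).ne
      have hne₂ : f x₂ ≠ ⊤ := (hf₂.trans_lt (EReal.coe_lt_top _)).ne
      have hs₁ : (((f x₁).toReal : ℝ) : EReal) = f x₁ := EReal.coe_toReal hne₁ (hfbot x₁)
      have hs₂ : (((f x₂).toReal : ℝ) : EReal) = f x₂ := EReal.coe_toReal hne₂ (hfbot x₂)
      set s₁ := (f x₁).toReal
      set s₂ := (f x₂).toReal
      have hst₁ : s₁ ≤ -t₁ := by rw [← EReal.coe_le_coe_iff, hs₁]; exact hf₁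
      have hst₂ : s₂ ≤ -t₂ := by rw [← EReal.coe_le_coe_iff, hs₂]; exact hf₂
      have hval : ((a • (y₁, t₁) + b • (y₂, t₂) : Y × ℝ).2 : ℝ) = a * t₁ + b * t₂ := by
        simp [Prod.smul_def, smul_eq_mul]
      rw [hval]
      have hkey : f (a • x₁ + b • x₂) ≤ ((-(a * t₁ + b * t₂) : ℝ) : EReal) := by
        calc f (a • x₁ + b • x₂) ≤ (a : EReal) * f x₁ + (b : EReal) * f x₂ :=
              hfconv x₁ x₂ a b ha hb hab
          _ = ((a * s₁ + b * s₂ : ℝ) : EReal) := by rw [← hs₁, ← hs₂]; norm_cast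
          _ ≤ ((-(a * t₁ + b * t₂) : ℝ) : EReal) := by
              apply EReal.coe_le_coe_iff.2
              nlinarith [mul_le_mul_of_nonneg_left hst₁ ha, mul_le_mul_of_nonneg_left hst₂ hb]
      rw [EReal.coe_neg] at hkey
      exact EReal.le_neg_of_le_neg hkey
  -- the open box inside U
  have hbox : Metric.ball y₀ δ ×ˢ Set.Ioi (v + 1) ⊆ U := by
    rintro ⟨y, t⟩ ⟨hy, ht⟩
    have h1 : g y < ((v + 1 : ℝ) : EReal) := hδ hy
    have h2 : ((v + 1 : ℝ) : EReal) < ((t : ℝ) : EReal) := by exact_mod_cast ht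
    exact h1.trans h2
  have hboxint : Metric.ball y₀ δ ×ˢ Set.Ioi (v + 1) ⊆ interior U :=
    interior_maximal hbox ((Metric.isOpen_ball).prod isOpen_Ioi)
  have hmemint : ∀ s : ℝ, v + 1 < s → (y₀, s) ∈ interior U := fun s hs =>
    hboxint ⟨Metric.mem_ball_self hδpos, hs⟩
  -- disjointness
  have hdisj : Disjoint (interior U) H := by
    rw [Set.disjoint_left]
    rintro ⟨y, t⟩ hpU ⟨x, hx, hle⟩
    have hpU' : ((y, t) : Y × ℝ) ∈ U := interior_subset hpU
    have hU : g y < (t : EReal) := hpU'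
    have h1 : f x ≤ -(t : EReal) := EReal.le_neg_of_le_neg hle
    have h2 : -g (T x) ≤ -(t : EReal) := (hge x).trans h1
    rw [hx] at h2
    have h3 : (t : EReal) ≤ g y := EReal.neg_le_neg_iff.1 h2
    exact absurd hU (not_lt.2 h3)
  obtain ⟨Φ, u, hΦ₁, hΦ₂⟩ :=
    geometric_hahn_banach_open (hUconv.interior) isOpen_interior hHconv hdisj
  -- Φ splits
  have hsplit : ∀ (y : Y) (t : ℝ), Φ (y, t) = Φ (y, 0) + t * Φ (0, 1) := by
    intro y t
    have h : ((y, t) : Y × ℝ) = (y, 0) + t • ((0 : Y), (1 : ℝ)) := by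
      simp [Prod.ext_iff]
    rw [h, map_add, map_smul, smul_eq_mul]
  set c : ℝ := Φ (0, 1) with hcdef
  -- Φ ≤ u on all of U
  have hΦU : ∀ p ∈ U, Φ p ≤ u := by
    rintro p hp
    by_contra hlt
    push_neg at hlt
    have hw : ((y₀, v + 2) : Y × ℝ) ∈ interior U := hmemint (v + 2) (by linarith)
    set w : Y × ℝ := (y₀, v + 2)
    have hΦw : Φ w < u := hΦ₁ w hw
    set a : ℝ := (Φ p - u) / (Φ p - Φ w) with hadef
    have hden : 0 < Φ p - Φ w := by linarith
    have ha : 0 < a := div_pos (by linarith) hden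
    have ha1 : a ≤ 1 := by
      rw [hadef, div_le_one hden]; linarith
    have hcomb : a • w + (1 - a) • p ∈ interior U :=
      hUconv.combo_interior_closure_mem_interior hw (subset_closure hp) ha
        (by linarith) (by ring)
    have := hΦ₁ _ hcomb
    rw [map_add, map_smul, map_smul, smul_eq_mul, smul_eq_mul] at this
    have haval : a * (Φ p - Φ w) = Φ p - u := by
      rw [hadef, div_mul_cancel₀]; exact hden.ne'
    nlinarith
  -- c ≤ 0
  have hcle : c ≤ 0 := by
    by_contra hcpos
    push_neg at hcpos
    set s : ℝ := max (v + 2) ((u - Φ (y₀, 0)) / c + 1) with hsdef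
    have hs1 : v + 1 < s := lt_of_lt_of_le (by linarith) (le_max_left _ _)
    have hs2 : (u - Φ (y₀, 0)) / c + 1 ≤ s := le_max_right _ _
    have hmem := hmemint s hs1
    have hlt := hΦ₁ _ hmem
    rw [hsplit y₀ s] at hlt
    have : (u - Φ (y₀, 0)) / c < s := by linarith
    rw [div_lt_iff₀ hcpos] at this
    linarith
  -- the reference point in H
  have hfx₀r : (((f x₀).toReal : ℝ) : EReal) = f x₀ := EReal.coe_toReal hfx₀ (hfbot x₀)
  have hp₀ : ((y₀, -(f x₀).toReal) : Y × ℝ) ∈ H := by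
    refine ⟨x₀, rfl, ?_⟩
    rw [EReal.coe_neg, hfx₀r]
  have hup₀ : u ≤ Φ (y₀, 0) + (-(f x₀).toReal) * c := by
    have := hΦ₂ _ hp₀
    rwa [hsplit] at this
  -- c < 0
  have hcneg : c < 0 := by
    rcases lt_or_eq_of_le hcle with h | h
    · exact h
    · exfalso
      have hmem := hmemint (v + 2) (by linarith)
      have hlt := hΦ₁ _ hmem
      rw [hsplit] at hlt
      rw [h] at hlt hup₀
      simp only [mul_zero, add_zero] at hlt hup₀
      linarith
  set lam : ℝ := -c with hlamdef
  have hlampos : 0 < lam := by simp [hlamdef]; linarith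
  -- the functional and constant
  refine ⟨lam⁻¹ • (-(Φ.comp (ContinuousLinearMap.inl ℝ Y ℝ))), u * lam⁻¹, ?_⟩
  intro x
  have hval : ∀ y : Y,
      ((lam⁻¹ • (-(Φ.comp (ContinuousLinearMap.inl ℝ Y ℝ)))) y + u * lam⁻¹ : ℝ)
        = (u - Φ (y, 0)) * lam⁻¹ := by
    intro y
    simp [ContinuousLinearMap.smul_apply, ContinuousLinearMap.neg_apply,
      ContinuousLinearMap.comp_apply, ContinuousLinearMap.inl_apply, smul_eq_mul]
    ring
  rw [hval (T x)]
  constructor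
  · -- (u - Φ(Tx,0)) / lam ≤ f x
    by_cases hfx : f x = ⊤
    · rw [hfx]; exact le_top
    · have har : (((f x).toReal : ℝ) : EReal) = f x := EReal.coe_toReal hfx (hfbot x)
      set a : ℝ := (f x).toReal
      have hmem : ((T x, -a) : Y × ℝ) ∈ H := ⟨x, rfl, by rw [EReal.coe_neg, har]⟩
      have h1 := hΦ₂ _ hmem
      rw [hsplit] at h1
      have hc' : -a * c = a * lam := by rw [hlamdef]; ring
      rw [hc'] at h1
      have h2 : (u - Φ (T x, 0)) * lam⁻¹ ≤ a := by
        rw [← div_eq_mul_inv, div_le_iff₀ hlampos]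
        nlinarith
      rw [← har]
      exact_mod_cast h2
  · -- -g(Tx) ≤ (u - Φ(Tx,0)) / lam
    by_cases hgx : g (T x) = ⊤
    · rw [hgx]; simp
    · have hbr : (((g (T x)).toReal : ℝ) : EReal) = g (T x) :=
        EReal.coe_toReal hgx (hgbot (T x))
      set b : ℝ := (g (T x)).toReal
      have hall : ∀ s : ℝ, b < s → Φ (T x, 0) + s * c ≤ u := by
        intro s hs
        have hmem : ((T x, s) : Y × ℝ) ∈ U := by
          show g (T x) < ((s : ℝ) : EReal)
          rw [← hbr]; exact_mod_cast hs
        have := hΦU _ hmem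
        rwa [hsplit] at this
      have hkey : -b ≤ (u - Φ (T x, 0)) * lam⁻¹ := by
        by_contra hcon
        push_neg at hcon
        set β : ℝ := (u - Φ (T x, 0)) * lam⁻¹ with hβdef
        have hβlam : β * lam = u - Φ (T x, 0) := by
          rw [hβdef, mul_assoc, inv_mul_cancel₀ hlampos.ne', mul_one]
        have hblt : b < -β := by linarith
        set s : ℝ := (b + (-β)) / 2
        have hbs : b < s := by simp only [s]; linarith
        have hsβ : s < -β := by simp only [s]; linarith
        have h1 := hall s hbs
        have h2 : Φ (T x, 0) - s * lam ≤ u := by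
          rw [hlamdef] at *; linarith [h1]
        have h3 : -(s * lam) ≤ β * lam := by linarith [hβlam]
        have h4 : -s ≤ β := by nlinarith
        linarith
      rw [← hbr, ← EReal.coe_neg]
      exact_mod_cast hkey
end
end

section
/- Let C be a nonempty weakly closed subset of a real Hilbert space H. Then C is convex if and only if C is a Chebyshev set, i.e., for each x ∈ H there is exactly one nearest point in C. -/
open Metric Filter Topology RealInnerProductSpace

noncomputable section

section ChebyshevAux

variable {H : Type*} [NormedAddCommGroup H] [InnerProductSpace ℝ H] [CompleteSpace H]

lemma weak_isCompact_closedBall (c : H) (r : ℝ) (S : Set H)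
    (hS : S = Metric.closedBall c r) :
    IsCompact (X := WeakSpace ℝ H) S := by
  set D := InnerProductSpace.toDual ℝ H with hD
  set φ : WeakDual ℝ H → WeakSpace ℝ H :=
    fun f => toWeakSpace ℝ H (D.symm (WeakDual.toStrongDual f)) with hφ
  have hφcont : Continuous φ := by
    apply WeakBilin.continuous_of_continuous_eval
    intro L
    have : (fun f : WeakDual ℝ H => (topDualPairing ℝ H).flip (φ f) L)
        = fun f : WeakDual ℝ H => f (D.symm L) := by
      funext f
      show L (D.symm (WeakDual.toStrongDual f)) = (WeakDual.toStrongDual f) (D.symm L)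
      conv_lhs => rw [← D.apply_symm_apply L]
      conv_rhs => rw [← D.apply_symm_apply (WeakDual.toStrongDual f)]
      rw [InnerProductSpace.toDual_apply_apply, InnerProductSpace.toDual_apply_apply, real_inner_comm]
    rw [this]
    exact WeakDual.eval_continuous _
  have hcb := WeakDual.isCompact_closedBall (𝕜 := ℝ) (E := H) (D c) r
  have himg := hcb.image hφcont
  have heq : φ '' (WeakDual.toStrongDual ⁻¹' Metric.closedBall (D c) r) = S := by
    rw [hS]
    ext z
    constructor
    · rintro ⟨f, hf, rfl⟩
      simp only [Set.mem_preimage, Metric.mem_closedBall] at hf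
      show D.symm (WeakDual.toStrongDual f) ∈ Metric.closedBall c r
      rw [Metric.mem_closedBall]
      have h2 := D.symm.dist_map (WeakDual.toStrongDual f) (D c)
      rw [D.symm_apply_apply] at h2
      rw [h2]
      exact hf
    · intro hz
      refine ⟨WeakDual.toStrongDual.symm (D z), ?_, ?_⟩
      · simp only [Set.mem_preimage]
        show D z ∈ Metric.closedBall (D c) r
        rw [Metric.mem_closedBall]
        exact (D.dist_map z c).le.trans hz
      · show toWeakSpace ℝ H (D.symm (D z)) = z
        exact congrArg (toWeakSpace ℝ H) (D.symm_apply_apply z)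
  rw [← heq]
  exact himg

lemma norm_isClosed_of_weak {C : Set H} (hC : IsClosed (X := WeakSpace ℝ H) C) :
    IsClosed C := by
  have := hC.preimage (toWeakSpaceCLM ℝ H).continuous
  exact this

-- evaluation of inner products is weakly continuous

lemma weak_continuous_inner (u : H) :
    Continuous (X := WeakSpace ℝ H) (fun z : WeakSpace ℝ H => (inner ℝ u z : ℝ)) := by
  have h := WeakBilin.eval_continuous ((topDualPairing ℝ H).flip)
      (InnerProductSpace.toDual ℝ H u)
  exact h

lemma midpoint_norm_sq (u v c' : H) : ‖(2⁻¹:ℝ)•(u + v) - c'‖^2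
    = (‖u - c'‖^2 + ‖v - c'‖^2)/2 - ‖u - v‖^2/4 := by
  have h1 : (2⁻¹:ℝ)•(u + v) - c' = (2⁻¹:ℝ)•((u - c') + (v - c')) := by module
  rw [h1, norm_smul]
  have h2 := parallelogram_law_with_norm ℝ (u - c') (v - c')
  have h3 : u - c' - (v - c') = u - v := by abel
  rw [h3] at h2
  simp only [Real.norm_eq_abs]
  rw [abs_of_pos (by norm_num : (0:ℝ) < 2⁻¹)]
  nlinarith [h2]

lemma tendsto_nearest {C : Set H} (hC : IsClosed (X := WeakSpace ℝ H) C)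
    {a p : H} (hpC : p ∈ C) (hpd : dist p a = infDist a C)
    (huniq : ∀ q : H, q ∈ C ∧ dist q a = infDist a C → q = p)
    {q : ℕ → H} (hq : ∀ n, q n ∈ C)
    (hconv : Tendsto (fun n => dist (q n) a) atTop (𝓝 (infDist a C))) :
    Tendsto q atTop (𝓝 p) := by
  set d := infDist a C with hd
  have hd0 : 0 ≤ d := Metric.infDist_nonneg
  by_contra hcon
  rw [Metric.tendsto_atTop] at hcon
  push_neg at hcon
  obtain ⟨δ, hδ, hfreq⟩ := hcon
  -- the subfilter of far points
  set G : Filter ℕ := atTop ⊓ 𝓟 {n | δ ≤ dist (q n) p} with hG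
  have hGne : G.NeBot := by
    rw [hG, ← frequently_iff_neBot]
    rw [frequently_atTop]
    intro N
    obtain ⟨n, hn, hfar⟩ := hfreq N
    exact ⟨n, hn, hfar⟩
  set F : Filter H := Filter.map q G with hF
  have hFne : F.NeBot := hGne.map q
  -- eventual bounds
  have hev : ∀ ε > (0:ℝ), ∀ᶠ n in G, dist (q n) a ≤ d + ε := by
    intro ε hε
    have : ∀ᶠ n in atTop, dist (q n) a ≤ d + ε := by
      filter_upwards [hconv.eventually (eventually_le_nhds (by linarith : d < d + ε))] with n h
      exact h
    exact this.filter_mono inf_le_left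
  have hball : ∀ᶠ n in G, q n ∈ C ∩ Metric.closedBall a (d + 1) := by
    filter_upwards [hev 1 one_pos] with n h
    exact ⟨hq n, by simpa [Metric.mem_closedBall] using h⟩
  set K : Set H := C ∩ Metric.closedBall a (d + 1) with hK
  have hKcomp : IsCompact (X := WeakSpace ℝ H) K :=
    (weak_isCompact_closedBall a (d+1) _ rfl).inter_left hC
  have hFK : F ≤ Filter.principal K := by
    rw [hF, Filter.le_principal_iff, Filter.mem_map]
    exact hball
  haveI hFne' : @Filter.NeBot (WeakSpace ℝ H) F := hFne
  obtain ⟨xw, hxKw, hclx⟩ := hKcomp.exists_clusterPt hFK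
  let x : H := xw
  have hxK : x ∈ K := hxKw
  have hxC : x ∈ C := hxK.1
  -- generic extraction
  have key : ∀ (g : H → ℝ), Continuous (X := WeakSpace ℝ H) g → ∀ ε > (0:ℝ),
      ∃ z : H, g z < g x + ε ∧ δ ≤ dist z p ∧ dist z a ≤ d + ε := by
    intro g hg ε hε
    have hop : IsOpen (X := WeakSpace ℝ H) {z : WeakSpace ℝ H | g z < g x + ε} :=
      isOpen_lt hg continuous_const
    have hU := hop.mem_nhds (show g x < g x + ε by linarith)
    have hS : {z : H | δ ≤ dist z p ∧ dist z a ≤ d + ε} ∈ F := by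
      rw [hF, Filter.mem_map]
      have h1 : ∀ᶠ n in G, δ ≤ dist (q n) p :=
        Filter.eventually_inf_principal.mpr (Filter.Eventually.of_forall (fun n h => h))
      filter_upwards [h1, hev ε hε] with n h1 h2
      exact ⟨h1, h2⟩
    have hne := hclx.neBot
    obtain ⟨z, hz1, hz2⟩ := Filter.NeBot.nonempty_of_mem hne
      (Filter.inter_mem_inf hU hS)
    exact ⟨z, hz1, hz2.1, hz2.2⟩
  -- step 1 : x = p
  have hxd : ‖a - x‖ ≤ d := by
    have hbound : ∀ ε > (0:ℝ), ‖a - x‖^2 ≤ ‖a - x‖ * (d + ε) + ε := by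
      intro ε hε
      have hcont : Continuous (X := WeakSpace ℝ H)
          (fun z : H => -(inner ℝ (a - x) (a - z) : ℝ)) := by
        have h1 : Continuous (X := WeakSpace ℝ H)
            (fun z : H => (inner ℝ (a - x) z : ℝ)) := weak_continuous_inner (a - x)
        have h2 : (fun z : H => -(inner ℝ (a-x) (a - z) : ℝ))
            = fun z : H => (inner ℝ (a-x) z : ℝ) - inner ℝ (a-x) a := by
          funext z; rw [inner_sub_right]; ring
        rw [h2]
        exact h1.sub continuous_const
      obtain ⟨z, hz1, _, hz3⟩ := key (fun z : H => -(inner ℝ (a - x) (a - z) : ℝ)) hcont ε hε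
      have h4 : (inner ℝ (a - x) (a - x) : ℝ) - ε < inner ℝ (a - x) (a - z) := by
        linarith
      have h5 : (inner ℝ (a - x) (a - z) : ℝ) ≤ ‖a - x‖ * ‖a - z‖ :=
        real_inner_le_norm _ _
      have h6 : ‖a - z‖ ≤ d + ε := by rw [← dist_eq_norm, dist_comm]; exact hz3
      have h7 : (inner ℝ (a-x) (a-x) : ℝ) = ‖a - x‖^2 := real_inner_self_eq_norm_sq _
      nlinarith [norm_nonneg (a - x), norm_nonneg (a - z)]
    by_contra hlt
    push_neg at hlt
    set s := ‖a - x‖ with hs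
    have hs0 : 0 < s := lt_of_le_of_lt hd0 hlt
    have hstep : ∀ ε > (0:ℝ), s^2 ≤ s*d + (s+1)*ε := by
      intro ε hε
      have := hbound ε hε
      nlinarith
    have hfin : s^2 ≤ s*d := by
      by_contra hc
      push_neg at hc
      have hεpos : 0 < (s^2 - s*d)/(2*(s+1)) := div_pos (by nlinarith) (by nlinarith)
      have h8 := hstep _ hεpos
      have h9 : (s+1)*((s^2 - s*d)/(2*(s+1))) = (s^2 - s*d)/2 := by
        field_simp
      rw [h9] at h8
      linarith
    nlinarith
  have hxp : x = p := by
    apply huniq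
    refine ⟨hxC, le_antisymm ?_ ?_⟩
    · rw [dist_eq_norm, ← norm_neg, neg_sub]
      exact hxd
    · rw [dist_comm]
      exact Metric.infDist_le_dist_of_mem hxC
  -- step 2 : contradiction
  subst hxp
  have hfinal : ∀ ε, 0 < ε → ε ≤ 1 → δ^2 ≤ (2*d + 3)*ε := by
    intro ε hε hε1
    have hcont : Continuous (X := WeakSpace ℝ H)
        (fun z : H => (2:ℝ) * inner ℝ (z - a) (a - x)) := by
      have h1 : Continuous (X := WeakSpace ℝ H)
          (fun z : H => (inner ℝ (a - x) z : ℝ)) := weak_continuous_inner (a - x)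
      have h2 : (fun z : H => (2:ℝ) * inner ℝ (z - a) (a - x))
          = fun z : H => (2:ℝ) * ((inner ℝ (a-x) z : ℝ) - inner ℝ (a-x) a) := by
        funext z
        rw [inner_sub_left, real_inner_comm z (a-x), real_inner_comm a (a-x)]
      rw [h2]
      exact continuous_const.mul (h1.sub continuous_const)
    obtain ⟨z, hz1, hz2, hz3⟩ := key (fun z : H => (2:ℝ) * inner ℝ (z - a) (a - x)) hcont ε hε
    have e1 : (2:ℝ) * inner ℝ (x - a) (a - x) = -2*‖a-x‖^2 := by
      have h0 : (inner ℝ (x-a) (a-x) : ℝ) = -(inner ℝ (a-x) (a-x) : ℝ) := by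
        rw [← inner_neg_left]; congr 1; abel
      rw [h0, real_inner_self_eq_norm_sq]; ring
    rw [e1] at hz1
    have e2 : ‖z - x‖^2 = ‖z-a‖^2 + 2*(inner ℝ (z-a) (a-x) : ℝ) + ‖a-x‖^2 := by
      have h0 : z - x = (z - a) + (a - x) := by abel
      rw [h0, ← real_inner_self_eq_norm_sq, ← real_inner_self_eq_norm_sq,
        ← real_inner_self_eq_norm_sq, inner_add_add_self]
      rw [real_inner_comm (a-x) (z-a)]
      ring
    have e3 : ‖a - x‖ = d := by rw [← dist_eq_norm, dist_comm]; exact hpd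
    have e4 : ‖z - a‖ ≤ d + ε := by rw [← dist_eq_norm]; exact hz3
    have e5 : δ ≤ ‖z - x‖ := by rw [← dist_eq_norm]; exact hz2
    have e6 : ‖z-a‖^2 ≤ (d+ε)^2 := by nlinarith [norm_nonneg (z-a)]
    nlinarith [norm_nonneg (z-x)]
  have hδ2 : δ^2 ≤ 0 := by
    by_contra hcc
    push_neg at hcc
    have hεpos : 0 < min 1 (δ^2/(2*(2*d+3))) := by
      apply lt_min one_pos
      apply div_pos hcc
      linarith
    have h9 := hfinal _ hεpos (min_le_left _ _)
    have h10 : (2*d+3) * min 1 (δ^2/(2*(2*d+3))) ≤ (2*d+3) * (δ^2/(2*(2*d+3))) :=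
      mul_le_mul_of_nonneg_left (min_le_right _ _) (by linarith)
    have h11 : (2*d+3) * (δ^2/(2*(2*d+3))) = δ^2/2 := by
      field_simp
    nlinarith
  nlinarith

lemma exists_minimizer {f : H → ℝ} (hf : Continuous f) {m : ℝ} (hm : ∀ x, m ≤ f x)
    {ε : ℝ} (hε : 0 < ε)
    (hconv : ∀ a b : H, f ((2⁻¹ : ℝ) • (a + b)) ≤ (f a + f b)/2 - ε * ‖a - b‖^2) :
    ∃ x : H, ∀ z : H, f x ≤ f z := by
  have hbdd : BddBelow (Set.range f) := ⟨m, by rintro _ ⟨x, rfl⟩; exact hm x⟩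
  have hner : (Set.range f).Nonempty := ⟨f 0, ⟨0, rfl⟩⟩
  set m0 := sInf (Set.range f) with hm0
  have hchoose : ∀ n : ℕ, ∃ x : H, f x < m0 + 1/(n+1) := by
    intro n
    obtain ⟨v, hv, hvlt⟩ := Real.lt_sInf_add_pos hner
      (show (0:ℝ) < 1/(n+1) by positivity)
    obtain ⟨x, rfl⟩ := hv
    exact ⟨x, hvlt⟩
  choose u hu using hchoose
  have hlow : ∀ x, m0 ≤ f x := fun x => csInf_le hbdd ⟨x, rfl⟩
  have hcauchy : CauchySeq u := by
    apply cauchySeq_of_le_tendsto_0 (fun N : ℕ => Real.sqrt (1/(ε*(N+1))))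
    · intro n k N hn hk
      have h1 : m0 ≤ f ((2⁻¹:ℝ) • (u n + u k)) := hlow _
      have h2 := hconv (u n) (u k)
      have h3 : f (u n) < m0 + 1/(n+1) := hu n
      have h4 : f (u k) < m0 + 1/(k+1) := hu k
      have h5 : ‖u n - u k‖^2 ≤ (1/(n+1) + 1/(k+1))/(2*ε) := by
        rw [le_div_iff₀ (by positivity : (0:ℝ) < 2*ε)]
        nlinarith
      have h6 : (1:ℝ)/(n+1) ≤ 1/(N+1) := by
        apply one_div_le_one_div_of_le (by positivity)
        have := hn
        push_cast
        exact_mod_cast by exact_mod_cast add_le_add_left (Nat.cast_le.mpr hn) 1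
      have h7 : (1:ℝ)/(k+1) ≤ 1/(N+1) := by
        apply one_div_le_one_div_of_le (by positivity)
        exact_mod_cast add_le_add_left (Nat.cast_le.mpr hk) 1
      have h8 : ‖u n - u k‖^2 ≤ 1/(ε*(N+1)) := by
        calc ‖u n - u k‖^2 ≤ (1/(n+1) + 1/(k+1))/(2*ε) := h5
          _ ≤ (1/(N+1) + 1/(N+1))/(2*ε) := by
              apply div_le_div_of_nonneg_right ?_ (by positivity) |>.trans_eq rfl
              linarith
          _ = 1/(ε*(N+1)) := by field_simp; ring
      rw [dist_eq_norm]
      have := Real.sqrt_le_sqrt h8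
      rwa [Real.sqrt_sq (norm_nonneg _)] at this
    · have h0 : Tendsto (fun N : ℕ => 1/(ε*(N+1))) atTop (𝓝 0) := by
        have h1 : Tendsto (fun N : ℕ => ((1:ℝ)/(N+1))) atTop (𝓝 0) :=
          tendsto_one_div_add_atTop_nhds_zero_nat
        have h2 := h1.const_mul (1/ε)
        simp only [mul_zero] at h2
        convert h2 using 2 with N
        field_simp
      have := (Real.continuous_sqrt.tendsto 0).comp h0
      simpa [Function.comp_def] using this
  obtain ⟨x, hx⟩ := cauchySeq_tendsto_of_complete hcauchy
  refine ⟨x, fun z => ?_⟩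
  have hfx : Tendsto (fun n => f (u n)) atTop (𝓝 (f x)) :=
    (hf.tendsto x).comp hx
  have hsq : Tendsto (fun n => f (u n)) atTop (𝓝 m0) := by
    have hA : Tendsto (fun n : ℕ => m0 + 1/(n+1)) atTop (𝓝 m0) := by
      have h := Filter.Tendsto.add (tendsto_const_nhds : Tendsto (fun _ : ℕ => m0) atTop (𝓝 m0))
        tendsto_one_div_add_atTop_nhds_zero_nat
      simpa using h
    exact tendsto_of_tendsto_of_tendsto_of_le_of_le tendsto_const_nhds hA
      (fun n => hlow (u n)) (fun n => (hu n).le)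
  have hxm : f x = m0 := tendsto_nhds_unique hfx hsq
  rw [hxm]
  exact hlow z

set_option maxHeartbeats 1600000 in
lemma mem_of_bound {C : Set H} (hne : C.Nonempty) (hC : IsClosed (X := WeakSpace ℝ H) C)
    (hcheb : ∀ x : H, ∃! v : H, v ∈ C ∧ dist v x = Metric.infDist x C)
    {y : H} {M : ℝ} (hM : ∀ x : H, (Metric.infDist x C)^2 - ‖x - y‖^2 ≤ M) : y ∈ C := by
  have hclosed : IsClosed C := norm_isClosed_of_weak hC
  obtain ⟨P, hP⟩ : ∃ P : H → H, ∀ x : H, P x ∈ C ∧ dist (P x) x = infDist x C :=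
    ⟨fun x => ((hcheb x).exists).choose, fun x => ((hcheb x).exists).choose_spec⟩
  have hPuniq : ∀ x : H, ∀ q : H, q ∈ C ∧ dist q x = infDist x C → q = P x :=
    fun x q hq => (hcheb x).unique hq (hP x)
  have hM0 : 0 ≤ M := by
    have := hM y
    have h2 : (infDist y C)^2 ≥ 0 := sq_nonneg _
    simp only [sub_self, norm_zero] at this
    nlinarith
  suffices hsuff : ∀ ε : ℝ, 0 < ε → ε ≤ 1 → (infDist y C)^2 ≤ ε * M by
    have hzero : infDist y C = 0 := by
      by_contra hnz
      have hpos : 0 < (infDist y C)^2 :=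
        pow_pos (lt_of_le_of_ne Metric.infDist_nonneg (Ne.symm hnz)) 2
      set t := (infDist y C)^2 with ht
      have hε : 0 < min 1 (t/(2*(M+1))) := lt_min one_pos (by positivity)
      have h1 := hsuff _ hε (min_le_left _ _)
      have h2 : min 1 (t/(2*(M+1))) * M ≤ (t/(2*(M+1))) * M :=
        mul_le_mul_of_nonneg_right (min_le_right _ _) hM0
      have h3 : (t/(2*(M+1))) * M ≤ t/2 := by
        rw [div_mul_eq_mul_div, div_le_div_iff₀ (by positivity) (by norm_num)]
        nlinarith
      linarith
    have := (Metric.mem_closure_iff_infDist_zero hne).mpr hzero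
    rwa [hclosed.closure_eq] at this
  intro ε hε hε1
  -- the perturbed functional
  set F : H → ℝ := fun x => (‖x - y‖^2 - (infDist x C)^2) + ε * ‖x - y‖^2 with hFdef
  have hFcont : Continuous F := by
    have h1 : Continuous fun x : H => ‖x - y‖^2 :=
      ((continuous_id.sub continuous_const).norm).pow 2
    have h2 : Continuous fun x : H => (infDist x C)^2 :=
      (Metric.continuous_infDist_pt C).pow 2
    exact (h1.sub h2).add (continuous_const.mul h1)
  have hFlow : ∀ x, -M ≤ F x := by
    intro x
    have h1 := hM x
    have h2 : 0 ≤ ε * ‖x - y‖^2 := by positivity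
    simp only [hFdef]
    nlinarith
  -- parallelogram identity
  have hpar : ∀ u v c' : H, ‖(2⁻¹:ℝ)•(u + v) - c'‖^2
      = (‖u - c'‖^2 + ‖v - c'‖^2)/2 - ‖u - v‖^2/4 := midpoint_norm_sq
  -- midpoint bound for the distance term
  have hmid : ∀ a b : H, ‖(2⁻¹:ℝ)•(a + b) - y‖^2
      + ((infDist a C)^2 - ‖a - y‖^2 + ((infDist b C)^2 - ‖b - y‖^2))/2
      ≤ (infDist ((2⁻¹:ℝ)•(a + b)) C)^2 := by
    intro a b
    set m := (2⁻¹:ℝ)•(a + b) with hm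
    set X := ‖m - y‖^2 + ((infDist a C)^2 - ‖a - y‖^2 + ((infDist b C)^2 - ‖b - y‖^2))/2
      with hX
    rcases le_or_gt X 0 with hXle | hXpos
    · exact hXle.trans (sq_nonneg _)
    · have hle : Real.sqrt X ≤ infDist m C := by
        by_contra hlt
        push_neg at hlt
        obtain ⟨c, hcC, hcd⟩ := (Metric.infDist_lt_iff hne).mp hlt
        -- show Real.sqrt X ≤ dist m c for contradiction
        have hXd : X ≤ (dist m c)^2 := by
          rw [dist_eq_norm]
          have hida : (infDist a C)^2 ≤ ‖a - c‖^2 := by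
            have := Metric.infDist_le_dist_of_mem (x := a) hcC
            rw [dist_eq_norm] at this
            exact pow_le_pow_left₀ Metric.infDist_nonneg this 2
          have hidb : (infDist b C)^2 ≤ ‖b - c‖^2 := by
            have := Metric.infDist_le_dist_of_mem (x := b) hcC
            rw [dist_eq_norm] at this
            exact pow_le_pow_left₀ Metric.infDist_nonneg this 2
          have hiden : ‖m - c‖^2 - ‖m - y‖^2
              = ((‖a - c‖^2 - ‖a - y‖^2) + (‖b - c‖^2 - ‖b - y‖^2))/2 := by
            have hA := hpar a b c
            have hB := hpar a b y
            rw [hm]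
            linarith
          rw [hX]
          nlinarith
        have hc2 : Real.sqrt X ≤ dist m c := by
          have := Real.sqrt_le_sqrt hXd
          rwa [Real.sqrt_sq dist_nonneg] at this
        have hc3 : dist m c < Real.sqrt X := hcd
        linarith
      have := pow_le_pow_left₀ (Real.sqrt_nonneg X) hle 2
      rwa [Real.sq_sqrt hXpos.le] at this
  -- strong midpoint convexity of F
  have hFconv : ∀ a b : H, F ((2⁻¹:ℝ)•(a + b)) ≤ (F a + F b)/2 - (ε/4) * ‖a - b‖^2 := by
    intro a b
    have h1 := hpar a b y
    have h2 := hmid a b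
    simp only [hFdef]
    nlinarith
  obtain ⟨xh, hxh⟩ := exists_minimizer hFcont hFlow (by positivity : (0:ℝ) < ε/4) hFconv
  set ph := P xh with hph
  have hphC : ph ∈ C := (hP xh).1
  have hphd : dist ph xh = infDist xh C := (hP xh).2
  set w : H := (ph - y) + ε•(xh - y) with hw
  have hwzero : w = 0 := by
    by_contra hw0
    have hwn : 0 < ‖w‖ := norm_pos_iff.mpr hw0
    -- key inequality for each t = 1/(n+1)
    have hkey : ∀ n : ℕ, 2*‖w‖^2 ≤ 2*(‖w‖*‖P (xh - (1/(n+1):ℝ)•w) - ph‖)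
        + ε*(1/(n+1))*‖w‖^2 := by
      intro n
      set t : ℝ := 1/(n+1) with htdef
      have ht : 0 < t := by positivity
      set z : H := xh - t•w with hz
      set pz := P z with hpz
      have hpzC : pz ∈ C := (hP z).1
      have hpzd : dist pz z = infDist z C := (hP z).2
      have hmin : F xh ≤ F z := hxh z
      -- E1
      have E1 : ‖z - y‖^2 = ‖xh - y‖^2 - 2*t*(inner ℝ w (xh - y) : ℝ) + t^2*‖w‖^2 := by
        have h0 : z - y = (xh - y) - t•w := by rw [hz]; abel
        rw [h0, norm_sub_sq_real, real_inner_smul_right, norm_smul]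
        simp only [Real.norm_eq_abs]
        rw [abs_of_pos ht, real_inner_comm]
        ring
      -- E2
      have E2 : (infDist xh C)^2 - 2*t*(inner ℝ w (xh - pz) : ℝ) + t^2*‖w‖^2
          ≤ (infDist z C)^2 := by
        have h0 : z - pz = (xh - pz) - t•w := by rw [hz]; abel
        have h1 : (infDist z C)^2 = ‖z - pz‖^2 := by
          rw [← hpzd, dist_eq_norm, norm_sub_rev]
        have h2 : ‖z - pz‖^2 = ‖xh - pz‖^2 - 2*t*(inner ℝ w (xh - pz) : ℝ) + t^2*‖w‖^2 := by
          rw [h0, norm_sub_sq_real, real_inner_smul_right, norm_smul]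
          simp only [Real.norm_eq_abs]
          rw [abs_of_pos ht, real_inner_comm]
          ring
        have h3 : (infDist xh C)^2 ≤ ‖xh - pz‖^2 := by
          have := Metric.infDist_le_dist_of_mem (x := xh) hpzC
          rw [dist_eq_norm] at this
          exact pow_le_pow_left₀ Metric.infDist_nonneg this 2
        rw [h1, h2]
        linarith
      -- E3
      have E3 : (inner ℝ w (xh - pz) : ℝ)
          = (1+ε)*(inner ℝ w (xh - y) : ℝ) - ‖w‖^2 + (inner ℝ w (ph - pz) : ℝ) := by
        have h0 : xh - pz = ((1+ε:ℝ)•(xh - y) - w) + (ph - pz) := by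
          rw [hw]; module
        rw [h0, inner_add_right, inner_sub_right, inner_smul_right,
          real_inner_self_eq_norm_sq]
      -- expand F-min inequality
      have hFz : (1+ε)*‖xh - y‖^2 - (infDist xh C)^2
          ≤ (1+ε)*‖z - y‖^2 - (infDist z C)^2 := by
        have hmin' := hmin
        simp only [hFdef] at hmin'
        nlinarith
      have hstep : t*(2*‖w‖^2) ≤ t*(2*(‖w‖*‖pz - ph‖) + ε*t*‖w‖^2) := by
        have hip : (inner ℝ w (ph - pz) : ℝ) ≤ ‖w‖*‖pz - ph‖ := by
          have := real_inner_le_norm w (ph - pz)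
          rwa [norm_sub_rev] at this
        have hip' : t*(inner ℝ w (ph - pz) : ℝ) ≤ t*(‖w‖*‖pz - ph‖) :=
          mul_le_mul_of_nonneg_left hip ht.le
        rw [E1] at hFz
        have E3t : (2*t)*(inner ℝ w (xh - pz) : ℝ)
            = (2*t)*((1+ε)*(inner ℝ w (xh - y) : ℝ) - ‖w‖^2 + (inner ℝ w (ph - pz) : ℝ)) := by
          rw [E3]
        nlinarith [hFz, E2, E3t, hip']
      have := le_of_mul_le_mul_left (by linarith [hstep] : t*(2*‖w‖^2)
        ≤ t*(2*(‖w‖*‖pz - ph‖) + ε*t*‖w‖^2)) ht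
      calc 2*‖w‖^2 ≤ 2*(‖w‖*‖pz - ph‖) + ε*t*‖w‖^2 := this
        _ = 2*(‖w‖*‖P (xh - (1/(n+1):ℝ)•w) - ph‖) + ε*(1/(n+1))*‖w‖^2 := by
            rw [hpz, hz, htdef]
    -- convergence of the projections
    have hconv : Tendsto (fun n : ℕ => dist (P (xh - (1/(n+1):ℝ)•w)) xh) atTop
        (𝓝 (infDist xh C)) := by
      have hlow : ∀ n : ℕ, infDist xh C ≤ dist (P (xh - (1/(n+1):ℝ)•w)) xh := by
        intro n
        rw [dist_comm]
        exact Metric.infDist_le_dist_of_mem (hP _).1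
      have hupp : ∀ n : ℕ, dist (P (xh - (1/(n+1):ℝ)•w)) xh
          ≤ infDist xh C + 2*(1/(n+1))*‖w‖ := by
        intro n
        set t : ℝ := 1/(n+1) with htdef
        have ht : (0:ℝ) < t := by positivity
        set z : H := xh - t•w with hz
        have hdzx : dist z xh = t*‖w‖ := by
          rw [hz, dist_eq_norm]
          have : xh - t•w - xh = -(t•w) := by abel
          rw [this, norm_neg, norm_smul, Real.norm_eq_abs, abs_of_pos ht]
        calc dist (P z) xh ≤ dist (P z) z + dist z xh := dist_triangle _ _ _
          _ = infDist z C + t*‖w‖ := by rw [(hP z).2, hdzx]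
          _ ≤ (infDist xh C + dist z xh) + t*‖w‖ := by
              have := Metric.infDist_le_infDist_add_dist (x := z) (y := xh) (s := C)
              linarith
          _ = infDist xh C + 2*t*‖w‖ := by rw [hdzx]; ring
      have htend : Tendsto (fun n : ℕ => infDist xh C + 2*(1/(n+1))*‖w‖) atTop
          (𝓝 (infDist xh C)) := by
        have h1 := tendsto_one_div_add_atTop_nhds_zero_nat.const_mul (2*‖w‖)
        have h2 := (tendsto_const_nhds :
          Tendsto (fun _ : ℕ => infDist xh C) atTop (𝓝 (infDist xh C))).add h1
        simp only [mul_zero, add_zero] at h2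
        convert h2 using 2 with n
        ring
      exact tendsto_of_tendsto_of_tendsto_of_le_of_le tendsto_const_nhds htend hlow hupp
    have hPtend : Tendsto (fun n : ℕ => P (xh - (1/(n+1):ℝ)•w)) atTop (𝓝 ph) :=
      tendsto_nearest hC hphC hphd (hPuniq xh) (fun n => (hP _).1) hconv
    have hnormtend : Tendsto (fun n : ℕ => 2*(‖w‖*‖P (xh - (1/(n+1):ℝ)•w) - ph‖)
        + ε*(1/(n+1))*‖w‖^2) atTop (𝓝 0) := by
      have h1 : Tendsto (fun n : ℕ => ‖P (xh - (1/(n+1):ℝ)•w) - ph‖) atTop (𝓝 0) := by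
        have h0 := (hPtend.sub (tendsto_const_nhds :
          Tendsto (fun _ : ℕ => ph) atTop (𝓝 ph))).norm
        simpa using h0
      have h2 := (h1.const_mul ‖w‖).const_mul (2:ℝ)
      have h3 := tendsto_one_div_add_atTop_nhds_zero_nat.const_mul (ε*‖w‖^2)
      have h4 := h2.add h3
      simp only [mul_zero, add_zero] at h4
      convert h4 using 2 with n
      ring
    have hfinal : 2*‖w‖^2 ≤ 0 := ge_of_tendsto hnormtend
      (Filter.Eventually.of_forall hkey)
    nlinarith
  -- w = 0 : conclude
  have hyp : y - ph = ε•(xh - y) := by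
    have h0 : ph - y + ε•(xh - y) = 0 := hwzero
    have h2 : y - ph + (ph - y + ε•(xh - y)) = ε•(xh - y) := by abel
    rw [h0, add_zero] at h2
    exact h2
  have hFy : F y ≤ 0 := by
    simp only [hFdef, sub_self, norm_zero]
    have : (0:ℝ)^2 = 0 := by norm_num
    rw [this]
    nlinarith [sq_nonneg (infDist y C)]
  have hFxh : -M + ε*‖xh - y‖^2 ≤ F xh := by
    have := hM xh
    simp only [hFdef]
    nlinarith
  have hεb : ε*‖xh - y‖^2 ≤ M := by
    have := hxh y
    nlinarith [hFy, hFxh]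
  have hnp : ‖y - ph‖ = ε*‖xh - y‖ := by
    rw [hyp, norm_smul, Real.norm_eq_abs, abs_of_pos hε]
  have hdy : infDist y C ≤ ε*‖xh - y‖ := by
    rw [← hnp, ← dist_eq_norm]
    exact Metric.infDist_le_dist_of_mem hphC
  have hsq : (infDist y C)^2 ≤ ε*(ε*‖xh - y‖^2) := by
    have h1 : (infDist y C)^2 ≤ (ε*‖xh - y‖)^2 :=
      pow_le_pow_left₀ Metric.infDist_nonneg hdy 2
    calc (infDist y C)^2 ≤ (ε*‖xh - y‖)^2 := h1
      _ = ε*(ε*‖xh - y‖^2) := by ring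
  calc (infDist y C)^2 ≤ ε*(ε*‖xh - y‖^2) := hsq
    _ ≤ ε*M := mul_le_mul_of_nonneg_left hεb hε.le

end ChebyshevAux

/-- A nonempty weakly closed subset of a real Hilbert space is convex if and only if it
is a Chebyshev set (every point has exactly one nearest point in the set). -/
theorem weakly_closed_convex_iff_chebyshev {H : Type*} [NormedAddCommGroup H]
    [InnerProductSpace ℝ H] [CompleteSpace H] (C : Set H) (hne : C.Nonempty)
    (hC : IsClosed (X := WeakSpace ℝ H) C) :
    Convex ℝ C ↔ ∀ x : H, ∃! v : H, v ∈ C ∧ dist v x = Metric.infDist x C := by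
  constructor
  · intro hconv x
    have hclosed : IsClosed C := norm_isClosed_of_weak hC
    obtain ⟨v, hvC, hvd⟩ :=
      exists_norm_eq_iInf_of_complete_convex hne hclosed.isComplete hconv x
    have hiInf : (⨅ w : C, ‖x - w‖) = infDist x C := by
      rw [Metric.infDist_eq_iInf]
      congr 1
      funext w
      rw [dist_eq_norm]
    have hvdist : dist v x = infDist x C := by
      rw [dist_eq_norm, norm_sub_rev, hvd, hiInf]
    refine ⟨v, ⟨hvC, hvdist⟩, ?_⟩
    rintro q ⟨hqC, hqd⟩
    -- uniqueness via parallelogram law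
    set δ := infDist x C with hδ
    have hm : (2⁻¹:ℝ)•(q + v) ∈ C := by
      have := hconv hqC hvC (by norm_num : (0:ℝ) ≤ 2⁻¹) (by norm_num : (0:ℝ) ≤ 2⁻¹)
        (by norm_num : (2⁻¹:ℝ) + 2⁻¹ = 1)
      rwa [← smul_add] at this
    have h1 : δ ≤ dist x ((2⁻¹:ℝ)•(q + v)) := Metric.infDist_le_dist_of_mem hm
    have h2 : dist x ((2⁻¹:ℝ)•(q + v))^2 = (‖q - x‖^2 + ‖v - x‖^2)/2 - ‖q - v‖^2/4 := by
      rw [dist_comm, dist_eq_norm]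
      exact midpoint_norm_sq q v x
    have h3 : ‖q - x‖ = δ := by rw [← dist_eq_norm]; exact hqd
    have h4 : ‖v - x‖ = δ := by rw [← dist_eq_norm]; exact hvdist
    have h5 : δ^2 ≤ dist x ((2⁻¹:ℝ)•(q + v))^2 := by
      apply pow_le_pow_left₀ Metric.infDist_nonneg h1
    rw [h2, h3, h4] at h5
    have h6 : ‖q - v‖^2 ≤ 0 := by nlinarith
    have h7 : ‖q - v‖ = 0 := by nlinarith [norm_nonneg (q - v), sq_nonneg ‖q - v‖]
    have := norm_eq_zero.mp h7
    have h8 : q = v := by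
      have h9 : q - v + v = v + 0 := by rw [this]; abel
      simpa using h9
    exact h8
  · intro hcheb
    intro a ha b hb s t hs ht hst
    set y := s•a + t•b with hy
    apply mem_of_bound hne hC hcheb (M := s*‖a‖^2 + t*‖b‖^2 - ‖y‖^2)
    intro x
    have hA : (infDist x C)^2 ≤ ‖x - a‖^2 := by
      have := Metric.infDist_le_dist_of_mem (x := x) ha
      rw [dist_eq_norm] at this
      exact pow_le_pow_left₀ Metric.infDist_nonneg this 2
    have hB : (infDist x C)^2 ≤ ‖x - b‖^2 := by
      have := Metric.infDist_le_dist_of_mem (x := x) hb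
      rw [dist_eq_norm] at this
      exact pow_le_pow_left₀ Metric.infDist_nonneg this 2
    have hA' : s*(infDist x C)^2 ≤ s*‖x - a‖^2 := mul_le_mul_of_nonneg_left hA hs
    have hB' : t*(infDist x C)^2 ≤ t*‖x - b‖^2 := mul_le_mul_of_nonneg_left hB ht
    have hd2 : s*(infDist x C)^2 + t*(infDist x C)^2 = (infDist x C)^2 := by
      rw [← add_mul, hst, one_mul]
    have e_a : ‖x - a‖^2 = ‖x‖^2 - 2*(inner ℝ x a : ℝ) + ‖a‖^2 := norm_sub_sq_real x a
    have e_b : ‖x - b‖^2 = ‖x‖^2 - 2*(inner ℝ x b : ℝ) + ‖b‖^2 := norm_sub_sq_real x b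
    have e_y : ‖x - y‖^2 = ‖x‖^2 - 2*(inner ℝ x y : ℝ) + ‖y‖^2 := norm_sub_sq_real x y
    have hy' : (inner ℝ x y : ℝ) = s*(inner ℝ x a : ℝ) + t*(inner ℝ x b : ℝ) := by
      rw [hy, inner_add_right, real_inner_smul_right, real_inner_smul_right]
    have e_a' : s*‖x - a‖^2 = s*(‖x‖^2 - 2*(inner ℝ x a : ℝ) + ‖a‖^2) := by rw [e_a]
    have e_b' : t*‖x - b‖^2 = t*(‖x‖^2 - 2*(inner ℝ x b : ℝ) + ‖b‖^2) := by rw [e_b]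
    have hsx : s*‖x‖^2 + t*‖x‖^2 = ‖x‖^2 := by rw [← add_mul, hst, one_mul]
    nlinarith [hA', hB', hd2, e_a', e_b', e_y, hy', hsx]
end
end

section
/- (Fitzpatrick) Let A : X ⇉ X* be a maximally monotone operator. Then for every (x, x*) ∈ X × X*, ⟨x, x*⟩ ≤ F_A(x, x*), where F_A is the Fitzpatrick function, and equality holds if and only if (x, x*) ∈ gra A. Moreover F_A is convex and proper. -/
noncomputable section
open NormedSpace

variable {X : Type*} [NormedAddCommGroup X] [NormedSpace ℝ X]

/-- A set-valued operator `A : X ⇉ X*`, given by its graph, is monotone. -/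
def MonotoneGraph (A : Set (X × StrongDual ℝ X)) : Prop :=
  ∀ a ∈ A, ∀ b ∈ A, 0 ≤ (a.2 - b.2) (a.1 - b.1)

/-- Maximal monotonicity: monotone with no proper monotone extension. -/
def MaximallyMonotoneGraph (A : Set (X × StrongDual ℝ X)) : Prop :=
  MonotoneGraph A ∧ ∀ p : X × StrongDual ℝ X, (∀ b ∈ A, 0 ≤ (p.2 - b.2) (p.1 - b.1)) → p ∈ A

/-- The Fitzpatrick function of `A`:
`F_A(x, x*) = sup_{(a,a*) ∈ A} (⟨x, a*⟩ + ⟨a, x*⟩ − ⟨a, a*⟩)`. -/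
def fitzpatrick (A : Set (X × StrongDual ℝ X)) : X × StrongDual ℝ X → EReal :=
  fun z => ⨆ a ∈ A, (((a.2 z.1 + z.2 a.1 - a.2 a.1 : ℝ) : EReal))

/-- Fitzpatrick: for a maximally monotone `A`, `⟨x, x*⟩ ≤ F_A(x, x*)` with equality iff
`(x, x*) ∈ gra A`; moreover `F_A` is convex and proper. -/
theorem fitzpatrick_function_properties (A : Set (X × StrongDual ℝ X))
    (hA : MaximallyMonotoneGraph A) :
    (∀ z : X × StrongDual ℝ X, ((z.2 z.1 : ℝ) : EReal) ≤ fitzpatrick A z) ∧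
    (∀ z : X × StrongDual ℝ X, fitzpatrick A z = ((z.2 z.1 : ℝ) : EReal) ↔ z ∈ A) ∧
    ERealConvexOn (fitzpatrick A) ∧
    ((∃ z, fitzpatrick A z ≠ ⊤) ∧ ∀ z, fitzpatrick A z ≠ ⊥) := by
  obtain ⟨hmono, hmax⟩ := hA
  -- lower bound by each member
  have hle : ∀ z : X × StrongDual ℝ X, ∀ c ∈ A,
      (((c.2 z.1 + z.2 c.1 - c.2 c.1 : ℝ)) : EReal) ≤ fitzpatrick A z := by
    intro z c hc
    exact le_iSup₂ (f := fun a (_ : a ∈ A) =>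
      (((a.2 z.1 + z.2 a.1 - a.2 a.1 : ℝ) : EReal))) c hc
  -- strict inequality off the graph
  have hstrict : ∀ z : X × StrongDual ℝ X, z ∉ A →
      ((z.2 z.1 : ℝ) : EReal) < fitzpatrick A z := by
    intro z hz
    have : ¬ ∀ b ∈ A, 0 ≤ (z.2 - b.2) (z.1 - b.1) := fun h => hz (hmax z h)
    push_neg at this
    obtain ⟨b, hb, hlt⟩ := this
    have hexp : (z.2 - b.2) (z.1 - b.1)
        = z.2 z.1 - z.2 b.1 - b.2 z.1 + b.2 b.1 := by
      simp [map_sub, ContinuousLinearMap.sub_apply]; ring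
    rw [hexp] at hlt
    have hr : (z.2 z.1 : ℝ) < b.2 z.1 + z.2 b.1 - b.2 b.1 := by linarith
    exact lt_of_lt_of_le (by exact_mod_cast hr) (hle z b hb)
  have h1 : ∀ z : X × StrongDual ℝ X, ((z.2 z.1 : ℝ) : EReal) ≤ fitzpatrick A z := by
    intro z
    by_cases hz : z ∈ A
    · have := hle z z hz
      simpa using this
    · exact (hstrict z hz).le
  have hAne : A.Nonempty := by
    rcases Set.eq_empty_or_nonempty A with h | h
    · subst h
      exact ⟨(0, 0), hmax (0, 0) (by intro b hb; exact absurd hb (Set.notMem_empty b))⟩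
    · exact h
  have h2 : ∀ z : X × StrongDual ℝ X, fitzpatrick A z = ((z.2 z.1 : ℝ) : EReal) ↔ z ∈ A := by
    intro z
    constructor
    · intro h
      by_contra hz
      exact (hstrict z hz).ne' h
    · intro hz
      refine le_antisymm ?_ (h1 z)
      refine iSup₂_le fun c hc => ?_
      have h0 := hmono z hz c hc
      have hexp : (z.2 - c.2) (z.1 - c.1)
          = z.2 z.1 - z.2 c.1 - c.2 z.1 + c.2 c.1 := by
        simp [map_sub, ContinuousLinearMap.sub_apply]; ring
      rw [hexp] at h0
      exact_mod_cast (by linarith : (c.2 z.1 + z.2 c.1 - c.2 c.1 : ℝ) ≤ z.2 z.1)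
  refine ⟨h1, h2, ?_, ?_, ?_⟩
  · intro x y a b ha hb hab
    refine iSup₂_le fun c hc => ?_
    have hterm : (c.2 (a • x + b • y).1 + (a • x + b • y).2 c.1 - c.2 c.1 : ℝ)
        = a * (c.2 x.1 + x.2 c.1 - c.2 c.1) + b * (c.2 y.1 + y.2 c.1 - c.2 c.1) := by
      simp [Prod.fst_add, Prod.snd_add, Prod.smul_fst, Prod.smul_snd, map_add, map_smul,
        ContinuousLinearMap.add_apply, ContinuousLinearMap.smul_apply, smul_eq_mul]
      linear_combination c.2 c.1 * hab
    rw [hterm]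
    have hx := hle x c hc
    have hy := hle y c hc
    calc ((a * (c.2 x.1 + x.2 c.1 - c.2 c.1) + b * (c.2 y.1 + y.2 c.1 - c.2 c.1) : ℝ) : EReal)
        = (a : EReal) * ((c.2 x.1 + x.2 c.1 - c.2 c.1 : ℝ) : EReal)
          + (b : EReal) * ((c.2 y.1 + y.2 c.1 - c.2 c.1 : ℝ) : EReal) := by
          push_cast; rfl
      _ ≤ (a : EReal) * fitzpatrick A x + (b : EReal) * fitzpatrick A y := by
          gcongr
  · obtain ⟨z, hz⟩ := hAne
    exact ⟨z, by rw [(h2 z).2 hz]; exact EReal.coe_ne_top _⟩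
  · intro z
    exact ((EReal.bot_lt_coe _).trans_le (h1 z)).ne'
end
end

section
/- (Local boundedness of monotone operators) Let A : X ⇉ X* be monotone with nonempty interior of its domain. Then A is locally bounded at every point x ∈ int dom A: there exist δ > 0 and K > 0 such that ‖y*‖ ≤ K whenever y* ∈ Ay and ‖y − x‖ ≤ δ. -/
noncomputable section
open NormedSpace

variable {X : Type*} [NormedAddCommGroup X] [NormedSpace ℝ X]

/-- Local boundedness of monotone operators: a monotone operator on a Banach space is
locally bounded at every interior point of its domain. -/
theorem monotone_locally_bounded [CompleteSpace X] (A : Set (X × StrongDual ℝ X))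
    (hA : MonotoneGraph A) (x : X) (hx : x ∈ interior {y : X | ∃ φ, (y, φ) ∈ A}) :
    ∃ δ > (0 : ℝ), ∃ K > (0 : ℝ), ∀ y : X, ∀ ψ : StrongDual ℝ X,
      (y, ψ) ∈ A → ‖y - x‖ ≤ δ → ‖ψ‖ ≤ K := by
  classical
  set D := {y : X | ∃ φ, (y, φ) ∈ A} with hDdef
  obtain ⟨r, hr, hrD⟩ : ∃ r > 0, Metric.closedBall x r ⊆ D := by
    rw [mem_interior_iff_mem_nhds] at hx
    exact Metric.nhds_basis_closedBall.mem_iff.mp hx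
  -- the key pointwise boundedness predicate
  set P : X → ℕ → Prop := fun z n =>
    ∀ y : X, ∀ ψ : StrongDual ℝ X, (y, ψ) ∈ A → ‖y - x‖ ≤ r → ψ (z - y) ≤ n with hPdef
  -- Baire category on the closed ball (a complete metric space)
  set S := Metric.closedBall x r with hSdef
  haveI : Nonempty S := ⟨⟨x, Metric.mem_closedBall_self hr.le⟩⟩
  haveI : CompleteSpace S := Metric.isClosed_closedBall.completeSpace_coe
  set F : ℕ → Set S := fun n => {z : S | P (z : X) n} with hFdef
  have hFc : ∀ n, IsClosed (F n) := by
    intro n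
    have : F n = ⋂ (p : X × StrongDual ℝ X) (_ : p ∈ A) (_ : ‖p.1 - x‖ ≤ r),
        {z : S | p.2 ((z : X) - p.1) ≤ n} := by
      ext z
      simp only [hFdef, hPdef, Set.mem_setOf_eq, Set.mem_iInter]
      constructor
      · intro h p hp hpr
        exact h p.1 p.2 hp hpr
      · intro h y ψ hy hyr
        exact h (y, ψ) hy hyr
    rw [this]
    refine isClosed_iInter fun p => isClosed_iInter fun _ => isClosed_iInter fun _ => ?_
    exact isClosed_le (p.2.continuous.comp (continuous_subtype_val.sub continuous_const))
      continuous_const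
  have hFU : ⋃ n, F n = Set.univ := by
    ext z
    simp only [Set.mem_iUnion, Set.mem_univ, iff_true]
    obtain ⟨φ, hφ⟩ := hrD z.2
    obtain ⟨n, hn⟩ := exists_nat_ge (‖φ‖ * (2 * r))
    refine ⟨n, ?_⟩
    intro y ψ hy hyr
    have hmono := hA ((z : X), φ) hφ (y, ψ) hy
    simp only [ContinuousLinearMap.sub_apply] at hmono
    have h1 : ψ ((z : X) - y) ≤ φ ((z : X) - y) := by linarith
    have h2 : φ ((z : X) - y) ≤ ‖φ‖ * ‖(z : X) - y‖ :=
      le_trans (le_abs_self _) (φ.le_opNorm _)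
    have hz : ‖(z : X) - x‖ ≤ r := mem_closedBall_iff_norm.mp z.2
    have h3 : ‖(z : X) - y‖ ≤ 2 * r := by
      calc ‖(z : X) - y‖ = ‖((z : X) - x) + (x - y)‖ := by congr 1; abel
        _ ≤ ‖(z : X) - x‖ + ‖x - y‖ := norm_add_le _ _
        _ ≤ r + r := by
            have : ‖x - y‖ = ‖y - x‖ := norm_sub_rev _ _
            linarith [this ▸ hyr]
        _ = 2 * r := by ring
    have h4 : ‖φ‖ * ‖(z : X) - y‖ ≤ ‖φ‖ * (2 * r) :=
      mul_le_mul_of_nonneg_left h3 (norm_nonneg _)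
    linarith
  obtain ⟨n, z1s, hz1⟩ := nonempty_interior_of_iUnion_of_closed hFc hFU
  rw [mem_interior_iff_mem_nhds, Metric.mem_nhds_iff] at hz1
  obtain ⟨ρ, hρ, hball⟩ := hz1
  set z1 : X := (z1s : X) with hz1def
  have hz1r : ‖z1 - x‖ ≤ r := mem_closedBall_iff_norm.mp z1s.2
  have hPball : ∀ z : X, dist z z1 < ρ → z ∈ Metric.closedBall x r → P z n := by
    intro z h1 h2
    exact hball (show (⟨z, h2⟩ : S) ∈ Metric.ball z1s ρ by
      rw [Metric.mem_ball, Subtype.dist_eq]; exact h1)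
  -- shift the center towards x to get a full ball in X
  set t : ℝ := min (ρ / (2 * r)) 1 with htdef
  have ht0 : 0 < t := lt_min (div_pos hρ (by linarith)) one_pos
  have ht1 : t ≤ 1 := min_le_right _ _
  set z2 : X := z1 + t • (x - z1) with hz2def
  have hz2x : ‖z2 - x‖ ≤ (1 - t) * r := by
    have : z2 - x = (1 - t) • (z1 - x) := by
      rw [hz2def]; module
    rw [this, norm_smul, Real.norm_eq_abs, abs_of_nonneg (by linarith)]
    exact mul_le_mul_of_nonneg_left hz1r (by linarith)
  have hz2z1 : ‖z2 - z1‖ ≤ ρ / 2 := by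
    have : z2 - z1 = t • (x - z1) := by rw [hz2def]; abel
    rw [this, norm_smul, Real.norm_eq_abs, abs_of_nonneg ht0.le]
    have h1 : t * ‖x - z1‖ ≤ t * r := by
      have : ‖x - z1‖ = ‖z1 - x‖ := norm_sub_rev _ _
      exact mul_le_mul_of_nonneg_left (this ▸ hz1r) ht0.le
    have h2 : t * r ≤ (ρ / (2 * r)) * r :=
      mul_le_mul_of_nonneg_right (min_le_left _ _) hr.le
    have h3 : (ρ / (2 * r)) * r = ρ / 2 := by field_simp
    linarith
  set ρ₂ : ℝ := min (ρ / 2) (t * r / 2) with hρ₂def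
  have hρ₂ : 0 < ρ₂ := lt_min (by linarith) (by positivity)
  have hP2 : ∀ z : X, dist z z2 < ρ₂ → P z n := by
    intro z hz
    rw [dist_eq_norm] at hz
    have hzr : z ∈ Metric.closedBall x r := by
      rw [mem_closedBall_iff_norm]
      have : ‖z - x‖ ≤ ‖z - z2‖ + ‖z2 - x‖ := norm_sub_le_norm_sub_add_norm_sub _ _ _
      have h1 : ρ₂ ≤ t * r / 2 := min_le_right _ _
      nlinarith [hr.le]
    refine hPball z ?_ hzr
    rw [dist_eq_norm]
    have : ‖z - z1‖ ≤ ‖z - z2‖ + ‖z2 - z1‖ := norm_sub_le_norm_sub_add_norm_sub _ _ _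
    have h1 : ρ₂ ≤ ρ / 2 := min_le_left _ _
    linarith
  -- pick a dual element at the reflected point p = 2x - z2
  set p : X := x + (x - z2) with hpdef
  have hpx : ‖p - x‖ ≤ r := by
    have : p - x = -(z2 - x) := by rw [hpdef]; abel
    rw [this, norm_neg]
    nlinarith [hz2x, ht0, hr.le]
  obtain ⟨φp, hφp⟩ := hrD (mem_closedBall_iff_norm.mpr hpx)
  set c : ℝ := ‖φp‖ * (2 * r) with hcdef
  set M : ℝ := max c n with hMdef
  have hM0 : 0 ≤ M := le_trans (Nat.cast_nonneg n) (le_max_right _ _)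
  -- key: uniform upper bound for ψ (z - y) for z near x
  have key : ∀ z : X, ‖z - x‖ < ρ₂ / 2 → ∀ y : X, ∀ ψ : StrongDual ℝ X,
      (y, ψ) ∈ A → ‖y - x‖ ≤ r → ψ (z - y) ≤ M := by
    intro z hz y ψ hy hyr
    set v : X := z + (z - p) with hvdef
    have hv : dist v z2 < ρ₂ := by
      rw [dist_eq_norm]
      have : v - z2 = (2 : ℝ) • (z - x) := by
        rw [hvdef, hpdef]; module
      rw [this, norm_smul, Real.norm_eq_abs]
      rw [abs_of_nonneg (by norm_num : (0:ℝ) ≤ 2)]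
      linarith
    have h1 : ψ (v - y) ≤ n := hP2 v hv y ψ hy hyr
    have h2 : ψ (p - y) ≤ c := by
      have hmono := hA (p, φp) hφp (y, ψ) hy
      simp only [ContinuousLinearMap.sub_apply] at hmono
      have ha : ψ (p - y) ≤ φp (p - y) := by linarith
      have hb : φp (p - y) ≤ ‖φp‖ * ‖p - y‖ :=
        le_trans (le_abs_self _) (φp.le_opNorm _)
      have hc1 : ‖p - y‖ ≤ 2 * r := by
        calc ‖p - y‖ = ‖(p - x) + (x - y)‖ := by congr 1; abel
          _ ≤ ‖p - x‖ + ‖x - y‖ := norm_add_le _ _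
          _ ≤ r + r := by
              have : ‖x - y‖ = ‖y - x‖ := norm_sub_rev _ _
              linarith [this ▸ hyr]
          _ = 2 * r := by ring
      have hc2 : ‖φp‖ * ‖p - y‖ ≤ ‖φp‖ * (2 * r) :=
        mul_le_mul_of_nonneg_left hc1 (norm_nonneg _)
      rw [hcdef]; linarith
    have hid : z - y = (2 : ℝ)⁻¹ • ((p - y) + (v - y)) := by
      rw [hvdef]; module
    have : ψ (z - y) = (2 : ℝ)⁻¹ * (ψ (p - y) + ψ (v - y)) := by
      rw [hid, map_smul, map_add, smul_eq_mul]
    rw [this]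
    have hcM : c ≤ M := le_max_left _ _
    have hnM : (n : ℝ) ≤ M := le_max_right _ _
    linarith
  -- conclude
  refine ⟨min (ρ₂ / 8) r, lt_min (by linarith) hr, M / (ρ₂ / 8) + 1, ?_, ?_⟩
  · have : 0 ≤ M / (ρ₂ / 8) := div_nonneg hM0 (by linarith)
    linarith
  · intro y ψ hy hyδ
    have hyr : ‖y - x‖ ≤ r := le_trans hyδ (min_le_right _ _)
    have hyρ : ‖y - x‖ ≤ ρ₂ / 8 := le_trans hyδ (min_le_left _ _)
    have hbound : ∀ w ∈ Metric.closedBall (0 : X) (ρ₂ / 8), ‖ψ w‖ ≤ M := by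
      intro w hw
      have hw' : ‖w‖ ≤ ρ₂ / 8 := by
        rw [Metric.mem_closedBall, dist_zero_right] at hw; exact hw
      have hup : ψ w ≤ M := by
        have h := key (y + w) (by
          have : ‖y + w - x‖ ≤ ‖y - x‖ + ‖w‖ := by
            calc ‖y + w - x‖ = ‖(y - x) + w‖ := by congr 1; abel
              _ ≤ ‖y - x‖ + ‖w‖ := norm_add_le _ _
          linarith) y ψ hy hyr
        simpa using h
      have hdown : -(ψ w) ≤ M := by
        have h := key (y - w) (by
          have : ‖y - w - x‖ ≤ ‖y - x‖ + ‖w‖ := by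
            calc ‖y - w - x‖ = ‖(y - x) + (-w)‖ := by congr 1; abel
              _ ≤ ‖y - x‖ + ‖-w‖ := norm_add_le _ _
              _ = ‖y - x‖ + ‖w‖ := by rw [norm_neg]
          linarith) y ψ hy hyr
        have : y - w - y = -w := by abel
        rw [this] at h
        simpa using h
      rw [Real.norm_eq_abs, abs_le]
      exact ⟨by linarith, hup⟩
    have := ContinuousLinearMap.opNorm_bound_of_ball_bound (by linarith : (0:ℝ) < ρ₂ / 8)
      M ψ hbound
    linarith
end
end
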